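/- Let n ≥ 1 and p ∈ [0,1], and let A be the amplitude of the random sparse IQP circuit on n qubits with edge probability p. Then the expectation of |A|² over the random choice of circuit equals 2^(−n). -/

import Mathlib

open Finset

noncomputable section

/-- The set of ordered pairs `(i, j)` with `i < j` in `Fin n`. -/
abbrev Pairs (n : ℕ) := {q : Fin n × Fin n // q.1 < q.2}

/-- The amplitude of the sparse IQP circuit determined by edge indicators `w`,
edge phases `a` and vertex phases `v`:
`A = 2^(−n) · Σ_x exp((iπ/4)·(Σ_{i<j} 2·w_{ij}·a_{ij}·x_i·x_j + Σ_k v_k·x_k))`. -/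
def amp (n : ℕ) (w : Pairs n → Fin 2) (a : Pairs n → Fin 4) (v : Fin n → Fin 8) : ℂ :=
  (2 : ℂ) ^ (-(n : ℤ)) * ∑ x : Fin n → ZMod 2,
    Complex.exp (Complex.I * (Real.pi : ℂ) / 4 *
      ((∑ e : Pairs n, 2 * (w e : ℕ) * (a e : ℕ) * (x e.1.1).val * (x e.1.2).val)
        + ∑ k : Fin n, (v k : ℕ) * (x k).val : ℕ))

/-- The probability of the configuration `(w, a, v)`: each `w e` is `1` with probability `p`
and `0` with probability `1 − p`, each `a e` is uniform on `{0,1,2,3}`, and each `v k` is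
uniform on `{0,…,7}`, all mutually independently. -/
def configWeight (n : ℕ) (p : ℝ) (w : Pairs n → Fin 2) : ℝ :=
  (∏ e : Pairs n, if w e = 1 then p else 1 - p)
    * (1 / 4) ^ (Fintype.card (Pairs n)) * (1 / 8) ^ n


def cc : ℂ := Complex.I * (Real.pi : ℂ) / 4

lemma exp_cc_pow8 : Complex.exp cc ^ 8 = 1 := by
  rw [← Complex.exp_nat_mul]
  have : (8:ℕ) * cc = 2 * Real.pi * Complex.I := by unfold cc; push_cast; ring
  rw [this, Complex.exp_two_pi_mul_I]

lemma exp_cc_ne_one : Complex.exp cc ≠ 1 := by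
  intro h
  rw [Complex.exp_eq_one_iff] at h
  obtain ⟨k, hk⟩ := h
  have hπ : (Real.pi : ℂ) ≠ 0 := by exact_mod_cast Real.pi_ne_zero
  have h2 : (1:ℂ) * (Complex.I * Real.pi) = (8*k) * (Complex.I * Real.pi) := by
    unfold cc at hk; linear_combination 4*hk
  have h3 : (1:ℂ) = 8*k := mul_right_cancel₀ (mul_ne_zero Complex.I_ne_zero hπ) h2
  have h4 : (1:ℤ) = 8*k := by exact_mod_cast h3
  omega

lemma exp_neg_cc_ne_one : Complex.exp (-cc) ≠ 1 := by
  rw [Complex.exp_neg]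
  intro h
  exact exp_cc_ne_one (inv_eq_one.mp h)

lemma geom0 (z : ℂ) (h8 : z ^ 8 = 1) (h1 : z ≠ 1) : ∑ t : Fin 8, z ^ (t : ℕ) = 0 := by
  rw [Fin.sum_univ_eq_sum_range (fun i => z ^ i) 8, geom_sum_eq h1, h8]
  simp

lemma Tsum (u v : ZMod 2) :
    ∑ t : Fin 8, Complex.exp (cc * ((t : ℕ) * u.val : ℕ)) *
      Complex.exp (-(cc * ((t : ℕ) * v.val : ℕ))) = if u = v then 8 else 0 := by
  have key : ∀ t : Fin 8, Complex.exp (cc * ((t : ℕ) * u.val : ℕ)) *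
      Complex.exp (-(cc * ((t : ℕ) * v.val : ℕ)))
      = Complex.exp (cc * u.val - cc * v.val) ^ (t : ℕ) := by
    intro t
    rw [← Complex.exp_add, ← Complex.exp_nat_mul]
    congr 1
    push_cast
    ring
  rw [Finset.sum_congr rfl fun t _ => key t]
  by_cases huv : u = v
  · subst huv
    simp
  · rw [if_neg huv]
    have hval : ((u.val : ℂ)) ≠ (v.val : ℂ) := by
      intro h
      apply huv
      have : u.val = v.val := by exact_mod_cast h
      exact ZMod.val_injective 2 this
    -- u.val, v.val ∈ {0,1}
    have hu := u.val_lt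
    have hv2 := v.val_lt
    interval_cases h1 : u.val <;> interval_cases h2 : v.val
    · simp at hval
    · apply geom0
      · simp only [Nat.cast_zero, Nat.cast_one, mul_zero, mul_one, zero_sub]
        rw [← Complex.exp_nat_mul]
        have : (8:ℕ) * (-cc) = -(2 * Real.pi * Complex.I) := by unfold cc; push_cast; ring
        rw [this, Complex.exp_neg, Complex.exp_two_pi_mul_I, inv_one]
      · simpa using exp_neg_cc_ne_one
    · apply geom0
      · simp only [Nat.cast_zero, Nat.cast_one, mul_zero, mul_one, sub_zero]
        exact exp_cc_pow8
      · simpa using exp_cc_ne_one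
    · simp at hval


def Qfun (n : ℕ) (w : Pairs n → Fin 2) (a : Pairs n → Fin 4) (x : Fin n → ZMod 2) : ℕ :=
  ∑ e : Pairs n, 2 * (w e : ℕ) * (a e : ℕ) * (x e.1.1).val * (x e.1.2).val

def Nfun (n : ℕ) (w : Pairs n → Fin 2) (a : Pairs n → Fin 4) (v : Fin n → Fin 8)
    (x : Fin n → ZMod 2) : ℕ :=
  Qfun n w a x + ∑ k : Fin n, (v k : ℕ) * (x k).val

lemma amp_eq (n w a v) : amp n w a v =
    (2 : ℂ) ^ (-(n : ℤ)) * ∑ x : Fin n → ZMod 2, Complex.exp (cc * (Nfun n w a v x)) := rfl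

lemma conj_cc : (starRingEnd ℂ) cc = -cc := by
  unfold cc
  simp [map_div₀, Complex.conj_I, map_ofNat]
  ring

lemma hconj (n w a v) : (starRingEnd ℂ) (amp n w a v) =
    (2 : ℂ) ^ (-(n : ℤ)) * ∑ y : Fin n → ZMod 2, Complex.exp (-(cc * (Nfun n w a v y))) := by
  rw [amp_eq, map_mul, map_sum]
  congr 1
  · rw [map_zpow₀, map_ofNat]
  · refine Finset.sum_congr rfl fun y _ => ?_
    rw [← Complex.exp_conj, map_mul, conj_cc, Complex.conj_natCast, neg_mul]

lemma split_exp (n w a) (z : Fin n → ZMod 2) (v : Fin n → Fin 8) :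
    Complex.exp (cc * (Nfun n w a v z)) = Complex.exp (cc * (Qfun n w a z)) *
      ∏ k : Fin n, Complex.exp (cc * (((v k : ℕ) * (z k).val : ℕ))) := by
  rw [← Complex.exp_sum, ← Complex.exp_add]
  congr 1
  rw [← Finset.mul_sum, ← mul_add]
  congr 1
  push_cast [Nfun]
  ring

lemma split_exp_neg (n w a) (z : Fin n → ZMod 2) (v : Fin n → Fin 8) :
    Complex.exp (-(cc * (Nfun n w a v z))) = Complex.exp (-(cc * (Qfun n w a z))) *
      ∏ k : Fin n, Complex.exp (-(cc * (((v k : ℕ) * (z k).val : ℕ)))) := by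
  rw [← Complex.exp_sum, ← Complex.exp_add]
  congr 1
  rw [show (∑ k : Fin n, -(cc * (((v k : ℕ) * (z k).val : ℕ)))) =
      -(∑ k : Fin n, (cc * (((v k : ℕ) * (z k).val : ℕ)))) by rw [Finset.sum_neg_distrib],
    ← neg_add, ← Finset.mul_sum, ← mul_add]
  congr 2
  push_cast [Nfun]
  ring

lemma inner_v (n w a) (x y : Fin n → ZMod 2) :
    ∑ v : Fin n → Fin 8, Complex.exp (cc * (Nfun n w a v x)) *
      Complex.exp (-(cc * (Nfun n w a v y))) = if x = y then (8:ℂ)^n else 0 := by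
  have step : ∀ v : Fin n → Fin 8,
      Complex.exp (cc * (Nfun n w a v x)) * Complex.exp (-(cc * (Nfun n w a v y)))
      = (Complex.exp (cc * (Qfun n w a x)) * Complex.exp (-(cc * (Qfun n w a y)))) *
        ∏ k : Fin n, (Complex.exp (cc * (((v k : ℕ) * (x k).val : ℕ))) *
          Complex.exp (-(cc * (((v k : ℕ) * (y k).val : ℕ))))) := by
    intro v
    rw [split_exp, split_exp_neg, Finset.prod_mul_distrib]
    ring
  rw [Finset.sum_congr rfl fun v _ => step v, ← Finset.mul_sum]
  have hfub : ∑ v : Fin n → Fin 8, ∏ k : Fin n,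
      (Complex.exp (cc * (((v k : ℕ) * (x k).val : ℕ))) *
        Complex.exp (-(cc * (((v k : ℕ) * (y k).val : ℕ)))))
      = ∏ k : Fin n, ∑ t : Fin 8, (Complex.exp (cc * (((t : ℕ) * (x k).val : ℕ))) *
        Complex.exp (-(cc * (((t : ℕ) * (y k).val : ℕ))))) := by
    rw [Fintype.prod_sum]
  rw [hfub, Finset.prod_congr rfl fun k _ => Tsum (x k) (y k)]
  by_cases hxy : x = y
  · subst hxy
    rw [if_pos rfl]
    simp only [if_pos rfl, Finset.prod_const, Finset.card_univ, Fintype.card_fin]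
    rw [← Complex.exp_add]
    simp
  · rw [if_neg hxy]
    obtain ⟨k, hk⟩ := Function.ne_iff.mp hxy
    rw [Finset.prod_eq_zero (Finset.mem_univ k) (by rw [if_neg hk]), mul_zero]

lemma sum_v (n : ℕ) (w : Pairs n → Fin 2) (a : Pairs n → Fin 4) :
    ∑ v : Fin n → Fin 8, amp n w a v * (starRingEnd ℂ) (amp n w a v) = (4:ℂ)^n := by
  have main : ∀ v : Fin n → Fin 8, amp n w a v * (starRingEnd ℂ) (amp n w a v) =
      ((2 : ℂ) ^ (-(n : ℤ)) * (2 : ℂ) ^ (-(n : ℤ))) * ∑ x : Fin n → ZMod 2,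
        ∑ y : Fin n → ZMod 2,
          Complex.exp (cc * (Nfun n w a v x)) * Complex.exp (-(cc * (Nfun n w a v y))) := by
    intro v
    rw [hconj, amp_eq, mul_mul_mul_comm, Finset.sum_mul_sum]
  rw [Finset.sum_congr rfl fun v _ => main v, ← Finset.mul_sum]
  have swap : ∑ v : Fin n → Fin 8, ∑ x : Fin n → ZMod 2, ∑ y : Fin n → ZMod 2,
      Complex.exp (cc * (Nfun n w a v x)) * Complex.exp (-(cc * (Nfun n w a v y)))
      = ∑ x : Fin n → ZMod 2, ∑ y : Fin n → ZMod 2, ∑ v : Fin n → Fin 8,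
      Complex.exp (cc * (Nfun n w a v x)) * Complex.exp (-(cc * (Nfun n w a v y))) := by
    rw [Finset.sum_comm]
    exact Finset.sum_congr rfl fun x _ => Finset.sum_comm
  rw [swap]
  have hin : ∀ x : Fin n → ZMod 2, ∑ y : Fin n → ZMod 2, ∑ v : Fin n → Fin 8,
      Complex.exp (cc * (Nfun n w a v x)) * Complex.exp (-(cc * (Nfun n w a v y)))
      = (8:ℂ)^n := by
    intro x
    rw [Finset.sum_congr rfl fun y _ => inner_v n w a x y]
    simp [Finset.sum_ite_eq]
  rw [Finset.sum_congr rfl (fun x _ => hin x), Finset.sum_const, Finset.card_univ]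
  have hcard : Fintype.card (Fin n → ZMod 2) = 2 ^ n := by simp
  rw [hcard, nsmul_eq_mul]
  have h2 : (2:ℂ) ≠ 0 := two_ne_zero
  rw [zpow_neg, zpow_natCast]
  push_cast
  rw [show ((2:ℂ)^n)⁻¹ * ((2:ℂ)^n)⁻¹ * ((2:ℂ)^n * (8:ℂ)^n) = ((2:ℂ)^n)⁻¹ * (2:ℂ)^n *
    (((2:ℂ)^n)⁻¹ * (8:ℂ)^n) by ring, inv_mul_cancel₀ (pow_ne_zero n h2), one_mul,
    inv_mul_eq_div, ← div_pow]
  norm_num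

lemma habs (z : ℂ) : ((‖z‖ : ℂ))^2 = z * (starRingEnd ℂ) z := by
  rw [← Complex.ofReal_pow, Complex.sq_norm, Complex.mul_conj]

lemma hv (n : ℕ) (w : Pairs n → Fin 2) (a : Pairs n → Fin 4) :
    ∑ v : Fin n → Fin 8, (‖amp n w a v‖)^2 = (4:ℝ)^n := by
  have h : ((∑ v : Fin n → Fin 8, (‖amp n w a v‖)^2 : ℝ) : ℂ) = (((4:ℝ)^n : ℝ) : ℂ) := by
    push_cast
    rw [Finset.sum_congr rfl fun v _ => habs (amp n w a v), sum_v]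
  exact_mod_cast h

/-- for `n ≥ 1` and `p ∈ [0,1]`, the expectation of `|A|²` over the random
choice of sparse IQP circuit equals `2^(−n)`. -/
theorem expectation_abs_sq_amp (n : ℕ) (hn : 1 ≤ n) (p : ℝ) (hp0 : 0 ≤ p) (hp1 : p ≤ 1) :
    ∑ w : Pairs n → Fin 2, ∑ a : Pairs n → Fin 4, ∑ v : Fin n → Fin 8,
      configWeight n p w * ‖amp n w a v‖ ^ 2 = (2 : ℝ) ^ (-(n : ℤ)) := by
  have hA : ∀ w : Pairs n → Fin 2, ∑ a : Pairs n → Fin 4, ∑ v : Fin n → Fin 8,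
      (‖amp n w a v‖)^2 = (4:ℝ)^(Fintype.card (Pairs n)) * 4^n := by
    intro w
    rw [Finset.sum_congr rfl fun a _ => hv n w a, Finset.sum_const, Finset.card_univ,
      nsmul_eq_mul]
    have hc : Fintype.card (Pairs n → Fin 4) = 4 ^ Fintype.card (Pairs n) := by
      simp [Fintype.card_fun]
    rw [hc]
    push_cast
    ring
  simp only [← Finset.mul_sum]
  rw [Finset.sum_congr rfl fun w _ => by rw [hA w], ← Finset.sum_mul]
  have hw : ∑ w : Pairs n → Fin 2, configWeight n p w
      = (1/4:ℝ)^(Fintype.card (Pairs n)) * (1/8)^n := by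
    unfold configWeight
    rw [← Finset.sum_mul, ← Finset.sum_mul]
    have h1 : ∑ w : Pairs n → Fin 2, ∏ e : Pairs n, (if w e = 1 then p else 1-p) = 1 := by
      rw [← Fintype.prod_sum (fun (e : Pairs n) (b : Fin 2) => if b = 1 then p else 1 - p)]
      have : ∀ e : Pairs n, ∑ b : Fin 2, (if b = 1 then p else 1 - p) = 1 := by
        intro e
        rw [Fin.sum_univ_two]
        norm_num
      rw [Finset.prod_congr rfl fun e _ => this e, Finset.prod_const_one]
    rw [h1, one_mul]
  rw [hw]
  have : (1/4:ℝ)^(Fintype.card (Pairs n)) * (1/8)^n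
      * ((4:ℝ)^(Fintype.card (Pairs n)) * 4^n)
      = ((1/4:ℝ)*4)^(Fintype.card (Pairs n)) * ((1/8:ℝ)*4)^n := by
    rw [mul_pow, mul_pow]
    ring
  rw [this, zpow_neg, zpow_natCast]
  norm_num
  rw [one_div, inv_pow]

end
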